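/- arXiv:1507.06542 — 11 statements merged into one kernel-verified Lean document; each statement's English description precedes it below -/
import Mathlib

section
/- Let E be a finite-dimensional real inner product space, ω an alternating bilinear form on E, and A : E → E the unique linear map with ω(v,w) = ⟨A v, w⟩ for all v, w. For every real number λ > 0, the eigenspace of −A² corresponding to λ has even dimension. -/
open RealInnerProductSpace

/-- For `A` associated to an alternating bilinear form `ω` via `ω v w = ⟪A v, w⟫`,
the eigenspace of `−A²` corresponding to any `λ > 0` has even dimension. -/
theorem stmt2 {E : Type*} [NormedAddCommGroup E] [InnerProductSpace ℝ E]
    [FiniteDimensional ℝ E]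
    (ω : E →ₗ[ℝ] E →ₗ[ℝ] ℝ) (hω : ∀ v : E, ω v v = 0)
    (A : E →ₗ[ℝ] E) (hA : ∀ v w : E, ω v w = ⟪A v, w⟫)
    (lam : ℝ) (hlam : 0 < lam) :
    Even (Module.finrank ℝ
      (Module.End.eigenspace (-(A ∘ₗ A) : Module.End ℝ E) lam)) := by
  set V := Module.End.eigenspace (-(A ∘ₗ A) : Module.End ℝ E) lam with hV
  have hmem : ∀ v ∈ V, A v ∈ V := by
    intro v hv
    rw [Module.End.mem_eigenspace_iff] at hv ⊢
    have : (-(A ∘ₗ A) : Module.End ℝ E) (A v) = A ((-(A ∘ₗ A) : Module.End ℝ E) v) := by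
      simp [LinearMap.comp_apply]
    rw [this, hv, map_smul]
  set B : V →ₗ[ℝ] V := A.restrict hmem with hB
  have hB2 : B ∘ₗ B = (-lam) • (LinearMap.id : V →ₗ[ℝ] V) := by
    ext v
    have hv := v.2
    rw [Module.End.mem_eigenspace_iff] at hv
    have : A (A v) = -(lam • (v : E)) := by
      have := hv
      simpa [LinearMap.comp_apply, neg_eq_iff_eq_neg] using this
    simpa [hB, LinearMap.restrict_apply, LinearMap.comp_apply] using this
  set n := Module.finrank ℝ V with hn
  have hdet : (LinearMap.det B) ^ 2 = (-lam) ^ n := by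
    have h1 : LinearMap.det (B ∘ₗ B) = LinearMap.det B * LinearMap.det B :=
      LinearMap.det_comp B B
    rw [hB2] at h1
    rw [sq, ← h1, LinearMap.det_smul, LinearMap.det_id, mul_one, hn]
  by_contra hodd
  rw [Nat.not_even_iff_odd] at hodd
  have hneg : (-lam) ^ n < 0 := Odd.pow_neg hodd (by linarith)
  nlinarith [sq_nonneg (LinearMap.det B)]
end

section
/- Let E be a finite-dimensional real inner product space, ω an alternating bilinear form on E with comass at most 1, and A : E → E the unique linear map with ω(v,w) = ⟨A v, w⟩ for all v, w. Then ⟨−A² v, v⟩ ≤ ⟨v, v⟩ for every v ∈ E, equivalently ‖A v‖ ≤ ‖v‖ for every v ∈ E; in particular every eigenvalue of −A² lies in the interval [0,1]. -/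
open RealInnerProductSpace

/-- If `ω` is an alternating bilinear form of comass at most 1 and `A` is its
associated map (`ω v w = ⟪A v, w⟫`), then `⟪−A² v, v⟫ ≤ ⟪v, v⟫`, equivalently
`‖A v‖ ≤ ‖v‖`, for all `v`; in particular every eigenvalue of `−A²` lies in `[0,1]`. -/
theorem stmt3 {E : Type*} [NormedAddCommGroup E] [InnerProductSpace ℝ E]
    [FiniteDimensional ℝ E]
    (ω : E →ₗ[ℝ] E →ₗ[ℝ] ℝ) (hω : ∀ v : E, ω v v = 0)
    (hcomass : ∀ v w : E, (ω v w) ^ 2 ≤ ‖v‖ ^ 2 * ‖w‖ ^ 2 - ⟪v, w⟫ ^ 2)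
    (A : E →ₗ[ℝ] E) (hA : ∀ v w : E, ω v w = ⟪A v, w⟫) :
    (∀ v : E, ⟪(-(A ∘ₗ A)) v, v⟫ ≤ ⟪v, v⟫) ∧
    (∀ v : E, ‖A v‖ ≤ ‖v‖) ∧
    (∀ mu : ℝ, Module.End.HasEigenvalue (-(A ∘ₗ A) : Module.End ℝ E) mu →
      mu ∈ Set.Icc (0 : ℝ) 1) := by
  -- skew-symmetry
  have hskew : ∀ v w : E, ω v w = - ω w v := by
    intro v w
    have h := hω (v + w)
    simp only [map_add, LinearMap.add_apply, hω] at h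
    linarith
  have hAv : ∀ v : E, ‖A v‖ ^ 2 ≤ ‖v‖ ^ 2 := by
    intro v
    have h1 : ω v (A v) = ‖A v‖ ^ 2 := by
      rw [hA]; exact real_inner_self_eq_norm_sq _
    have h2 : ⟪v, A v⟫ = 0 := by
      rw [real_inner_comm, ← hA, hω]
    have h := hcomass v (A v)
    rw [h1, h2] at h
    nlinarith [sq_nonneg (‖A v‖ ^ 2), sq_nonneg (‖A v‖)]
  have hinner : ∀ v : E, ⟪(-(A ∘ₗ A)) v, v⟫ = ‖A v‖ ^ 2 := by
    intro v
    have : ⟪A (A v), v⟫ = ω (A v) v := (hA _ _).symm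
    rw [hskew, hA, real_inner_comm] at this
    simp only [LinearMap.neg_apply, LinearMap.comp_apply, inner_neg_left]
    rw [real_inner_comm, this, neg_neg, real_inner_self_eq_norm_sq]
  have hnorm : ∀ v : E, ‖A v‖ ≤ ‖v‖ := fun v => by
    nlinarith [hAv v, norm_nonneg (A v), norm_nonneg v]
  refine ⟨fun v => ?_, hnorm, fun mu hmu => ?_⟩
  · rw [hinner, real_inner_self_eq_norm_sq]; exact hAv v
  · obtain ⟨v, hv, hv0⟩ := hmu.exists_hasEigenvector
    have hev : (-(A ∘ₗ A)) v = mu • v := Module.End.mem_eigenspace_iff.mp hv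
    have h1 : ⟪(-(A ∘ₗ A)) v, v⟫ = mu * ‖v‖ ^ 2 := by
      rw [hev, real_inner_smul_left, real_inner_self_eq_norm_sq]
    have h2 := hinner v
    have h3 := hAv v
    have hvpos : 0 < ‖v‖ ^ 2 := by have := norm_pos_iff.mpr hv0; positivity
    constructor
    · nlinarith [sq_nonneg ‖A v‖]
    · nlinarith
end

section
/- Let E be a finite-dimensional real inner product space and ω an alternating bilinear form on E with comass at most 1 (first cousin principle in degree 2). If v, w ∈ E are orthonormal with ω(v,w) = 1, and t ∈ E is orthogonal to both v and w, then ω(v,t) = 0 and ω(w,t) = 0. -/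
open RealInnerProductSpace

lemma stmt4_aux (a C : ℝ) (h : ∀ s : ℝ, 2*s*a ≤ s^2*C) : a = 0 := by
  by_contra ha
  have ha2 : 0 < a^2 := by positivity
  have hC : 2 ≤ C := by have := h a; nlinarith
  have hCpos : 0 < C := by linarith
  have h2 := h (a/C)
  have h3 := mul_le_mul_of_nonneg_right h2 hCpos.le
  have hCne : C ≠ 0 := ne_of_gt hCpos
  rw [div_pow] at h3
  have e : a^2 / C^2 * C * C = a^2 := by field_simp
  have e2 : 2 * (a/C) * a * C = 2 * a^2 := by field_simp
  rw [e, e2] at h3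
  nlinarith

/-- First cousin principle in degree 2: if `ω` is an alternating bilinear form of
comass at most 1, `v, w` are orthonormal with `ω v w = 1`, and `t` is orthogonal to
both `v` and `w`, then `ω v t = 0` and `ω w t = 0`. -/
theorem stmt4 {E : Type*} [NormedAddCommGroup E] [InnerProductSpace ℝ E]
    [FiniteDimensional ℝ E]
    (ω : E →ₗ[ℝ] E →ₗ[ℝ] ℝ) (hω : ∀ v : E, ω v v = 0)
    (hcomass : ∀ v w : E, (ω v w) ^ 2 ≤ ‖v‖ ^ 2 * ‖w‖ ^ 2 - ⟪v, w⟫ ^ 2)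
    (v w t : E) (hv : ‖v‖ = 1) (hw : ‖w‖ = 1) (hvw : ⟪v, w⟫ = 0)
    (hcal : ω v w = 1) (hvt : ⟪v, t⟫ = 0) (hwt : ⟪w, t⟫ = 0) :
    ω v t = 0 ∧ ω w t = 0 := by
  have hwv : ⟪w, v⟫ = 0 := by rw [real_inner_comm]; exact hvw
  have hnorm : ∀ (u : E) (s : ℝ), ‖u‖ = 1 → ⟪u, t⟫ = 0 →
      ‖u + s • t‖ ^ 2 = 1 + s^2 * ‖t‖^2 := by
    intro u s hu hut
    rw [@norm_add_sq_real, real_inner_smul_right, hut, norm_smul, hu]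
    simp [mul_pow, sq_abs]
  have hanti : ω w v = -1 := by
    have := hω (v + w)
    simp only [map_add, LinearMap.add_apply, hω v, hω w] at this
    linarith [hcal, this]
  have key : ∀ (u u' : E), ‖u‖ = 1 → ‖u'‖ = 1 → ⟪u, u'⟫ = 0 → ⟪u, t⟫ = 0 →
      ⟪u', t⟫ = 0 → (ω u u')^2 = 1 → ω u t = 0 := by
    intro u u' hu hu' huu' hut hu't hb2
    have hba : ω u u' * ω u t = 0 := by
      apply stmt4_aux (ω u u' * ω u t) (‖t‖^2 - (ω u u' * ω u t)^2)
      intro s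
      have h := hcomass u (u' + s • t)
      rw [hnorm u' s hu' hu't] at h
      have hin : ⟪u, u' + s • t⟫ = 0 := by
        rw [inner_add_right, real_inner_smul_right, huu', hut]; ring
      rw [hin, hu] at h
      have hωe : ω u (u' + s • t) = ω u u' + s * ω u t := by
        simp [map_add, map_smul]
      rw [hωe] at h
      have e : (ω u u' * ω u t)^2 = (ω u t)^2 := by
        rw [mul_pow, hb2, one_mul]
      rw [e]
      nlinarith [h, hb2]
    have hbne : ω u u' ≠ 0 := by
      intro hz; rw [hz] at hb2; norm_num at hb2
    exact (mul_eq_zero.mp hba).resolve_left hbne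
  constructor
  · exact key v w hv hw hvw hvt hwt (by rw [hcal]; norm_num)
  · exact key w v hw hv hwv hwt hvt (by rw [hanti]; norm_num)
end

section
/- Let E be a finite-dimensional real inner product space, ω an alternating bilinear form on E with comass at most 1, and A : E → E the unique linear map with ω(v,w) = ⟨A v, w⟩ for all v, w. If v, w ∈ E are orthonormal with ω(v,w) = 1, then A v = w and A w = −v; in particular the plane span{v,w} is invariant under A, and −A² u = u for every u ∈ span{v,w}. -/
open RealInnerProductSpace

lemma stmt5_norm_le {E : Type*} [NormedAddCommGroup E] [InnerProductSpace ℝ E]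
    (ω : E →ₗ[ℝ] E →ₗ[ℝ] ℝ) (hω : ∀ v : E, ω v v = 0)
    (hcomass : ∀ v w : E, (ω v w) ^ 2 ≤ ‖v‖ ^ 2 * ‖w‖ ^ 2 - ⟪v, w⟫ ^ 2)
    (A : E →ₗ[ℝ] E) (hA : ∀ v w : E, ω v w = ⟪A v, w⟫)
    (x : E) (hx : ‖x‖ = 1) : ‖A x‖ ^ 2 ≤ 1 := by
  have h0 : ⟪x, A x⟫ = 0 := by
    rw [real_inner_comm, ← hA, hω]
  have h := hcomass x (A x)
  rw [hA, real_inner_self_eq_norm_sq, hx, h0] at h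
  nlinarith [sq_nonneg (‖A x‖ ^ 2 - 1), sq_nonneg (‖A x‖)]

/-- If `v, w` are orthonormal with `ω v w = 1` for an alternating bilinear form `ω`
of comass at most 1 with associated map `A` (`ω v w = ⟪A v, w⟫`), then `A v = w`,
`A w = −v`; in particular `span {v, w}` is `A`-invariant and `−A² u = u` on it. -/
theorem stmt5 {E : Type*} [NormedAddCommGroup E] [InnerProductSpace ℝ E]
    [FiniteDimensional ℝ E]
    (ω : E →ₗ[ℝ] E →ₗ[ℝ] ℝ) (hω : ∀ v : E, ω v v = 0)
    (hcomass : ∀ v w : E, (ω v w) ^ 2 ≤ ‖v‖ ^ 2 * ‖w‖ ^ 2 - ⟪v, w⟫ ^ 2)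
    (A : E →ₗ[ℝ] E) (hA : ∀ v w : E, ω v w = ⟪A v, w⟫)
    (v w : E) (hv : ‖v‖ = 1) (hw : ‖w‖ = 1) (hvw : ⟪v, w⟫ = 0)
    (hcal : ω v w = 1) :
    A v = w ∧ A w = -v ∧
    (∀ u ∈ Submodule.span ℝ ({v, w} : Set E), A u ∈ Submodule.span ℝ ({v, w} : Set E)) ∧
    (∀ u ∈ Submodule.span ℝ ({v, w} : Set E), (-(A ∘ₗ A)) u = u) := by
  have hanti : ω w v = -1 := by
    have h := hω (v + w)
    simp only [map_add, LinearMap.add_apply, hω v, hω w, hcal] at h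
    linarith
  have hAv : A v = w := by
    have hle := stmt5_norm_le ω hω hcomass A hA v hv
    have h1 : ⟪A v, w⟫ = 1 := by rw [← hA, hcal]
    have : ‖A v - w‖ ^ 2 ≤ 0 := by
      rw [norm_sub_sq_real, h1, hw]
      nlinarith
    have := le_antisymm this (sq_nonneg _)
    rw [pow_eq_zero_iff (by norm_num), norm_eq_zero, sub_eq_zero] at this
    exact this
  have hAw : A w = -v := by
    have hle := stmt5_norm_le ω hω hcomass A hA w hw
    have h1 : ⟪A w, v⟫ = -1 := by rw [← hA, hanti]
    have : ‖A w - (-v)‖ ^ 2 ≤ 0 := by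
      rw [norm_sub_sq_real, norm_neg, hv, inner_neg_right, h1]
      nlinarith
    have := le_antisymm this (sq_nonneg _)
    rw [pow_eq_zero_iff (by norm_num), norm_eq_zero, sub_eq_zero] at this
    exact this
  have hvmem : v ∈ Submodule.span ℝ ({v, w} : Set E) :=
    Submodule.subset_span (by simp)
  have hwmem : w ∈ Submodule.span ℝ ({v, w} : Set E) :=
    Submodule.subset_span (by simp)
  refine ⟨hAv, hAw, ?_, ?_⟩
  · intro u hu
    induction hu using Submodule.span_induction with
    | mem x hx =>
      rcases hx with rfl | rfl
      · rw [hAv]; exact hwmem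
      · rw [hAw]; exact Submodule.neg_mem _ hvmem
    | zero => simp
    | add x y _ _ hx hy => rw [map_add]; exact Submodule.add_mem _ hx hy
    | smul c x _ hx => rw [map_smul]; exact Submodule.smul_mem _ _ hx
  · intro u hu
    induction hu using Submodule.span_induction with
    | mem x hx =>
      rcases hx with rfl | rfl
      · simp [hAv, hAw]
      · simp [hAv, hAw]
    | zero => simp
    | add x y _ _ hx hy => rw [map_add, hx, hy]
    | smul c x _ hx => rw [map_smul, hx]
end

section
/- Let E be a finite-dimensional real inner product space and A : E → E an injective skew-adjoint linear map. Let Q be the unique positive self-adjoint square root of −A², and set J := Q⁻¹ ∘ A. Then J² = −Id, and J is an isometry with respect to the inner product: ⟨J v, J w⟩ = ⟨v, w⟩ for all v, w ∈ E. -/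
open RealInnerProductSpace

/-- If `A` is injective and skew-adjoint, `Q` is the positive self-adjoint square
root of `−A²`, and `J := Q⁻¹ ∘ A` (characterized by `Q ∘ J = A`), then `J² = −Id`
and `J` preserves the inner product. -/
theorem stmt8 {E : Type*} [NormedAddCommGroup E] [InnerProductSpace ℝ E]
    [FiniteDimensional ℝ E]
    (A : E →ₗ[ℝ] E) (hskew : ∀ v w : E, ⟪A v, w⟫ = -⟪v, A w⟫)
    (hinj : Function.Injective A)
    (Q : E →ₗ[ℝ] E) (hQsa : ∀ v w : E, ⟪Q v, w⟫ = ⟪v, Q w⟫)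
    (hQpos : ∀ v : E, 0 ≤ ⟪Q v, v⟫)
    (hQsq : Q ∘ₗ Q = -(A ∘ₗ A)) :
    (∃ J : E →ₗ[ℝ] E, Q ∘ₗ J = A) ∧
    ∀ J : E →ₗ[ℝ] E, Q ∘ₗ J = A →
      J ∘ₗ J = -LinearMap.id ∧ ∀ v w : E, ⟪J v, J w⟫ = ⟪v, w⟫ := by
  -- pointwise version of hQsq
  have hsq : ∀ v, Q (Q v) = -A (A v) := by
    intro v
    have := congrFun (congrArg (fun f => f.toFun) hQsq) v
    simpa using this
  -- Q injective
  have Qinj : Function.Injective Q := by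
    intro v w h
    have h2 : Q (Q v) = Q (Q w) := by rw [h]
    rw [hsq, hsq] at h2
    exact hinj (hinj (neg_injective h2))
  have Qbij : Function.Bijective Q :=
    ⟨Qinj, (LinearMap.injective_iff_surjective).mp Qinj⟩
  have Abij : Function.Bijective A :=
    ⟨hinj, (LinearMap.injective_iff_surjective).mp hinj⟩
  set qe : E ≃ₗ[ℝ] E := LinearEquiv.ofBijective Q Qbij with hqe
  set ae : E ≃ₗ[ℝ] E := LinearEquiv.ofBijective A Abij with hae
  have qe_apply : ∀ v, qe v = Q v := fun v => rfl
  have ae_apply : ∀ v, ae v = A v := fun v => rfl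
  set Qi : E →ₗ[ℝ] E := qe.symm.toLinearMap with hQi
  have hQQi : ∀ v, Q (Qi v) = v := fun v => qe.apply_symm_apply v
  have hQiQ : ∀ v, Qi (Q v) = v := fun v => qe.symm_apply_apply v
  -- Qi is symmetric
  have Qisa : ∀ v w : E, ⟪Qi v, w⟫ = ⟪v, Qi w⟫ := by
    intro v w
    calc ⟪Qi v, w⟫ = ⟪Qi v, Q (Qi w)⟫ := by rw [hQQi]
    _ = ⟪Q (Qi v), Qi w⟫ := (hQsa _ _).symm
    _ = ⟪v, Qi w⟫ := by rw [hQQi]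
  -- Qi is positive
  have Qipos : ∀ v : E, 0 ≤ ⟪Qi v, v⟫ := by
    intro v
    calc (0:ℝ) ≤ ⟪Q (Qi v), Qi v⟫ := hQpos _
    _ = ⟪Qi v, Q (Qi v)⟫ := hQsa _ _
    _ = ⟪Qi v, v⟫ := by rw [hQQi]
    _ = ⟪v, Qi v⟫ := real_inner_comm _ _
    _ = ⟪Qi v, v⟫ := real_inner_comm _ _
  -- R := -(A ∘ Qi ∘ A)
  set R : E →ₗ[ℝ] E := -(A ∘ₗ Qi ∘ₗ A) with hR
  have hRapp : ∀ v, R v = -A (Qi (A v)) := by intro v; simp [hR]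
  have Rsa : ∀ v w : E, ⟪R v, w⟫ = ⟪v, R w⟫ := by
    intro v w
    calc ⟪R v, w⟫ = -⟪A (Qi (A v)), w⟫ := by rw [hRapp, inner_neg_left]
    _ = ⟪Qi (A v), A w⟫ := by rw [hskew]; ring
    _ = ⟪A v, Qi (A w)⟫ := Qisa _ _
    _ = -⟪v, A (Qi (A w))⟫ := hskew _ _
    _ = ⟪v, R w⟫ := by rw [hRapp, inner_neg_right]
  have Rpos : ∀ v : E, 0 ≤ ⟪R v, v⟫ := by
    intro v
    rw [hRapp, inner_neg_left, hskew]
    simpa [real_inner_comm] using Qipos (A v)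
  have Rsq : ∀ v, R (R v) = Q (Q v) := by
    intro v
    have h := hsq (Qi (A v))
    rw [hQQi] at h
    rw [hRapp (R v), hRapp v, map_neg, ← h, hQiQ, ← hsq]
  -- positivity + symmetry + inner zero implies kernel
  have posdef : ∀ T : E →ₗ[ℝ] E, (∀ v w : E, ⟪T v, w⟫ = ⟪v, T w⟫) →
      (∀ v : E, 0 ≤ ⟪T v, v⟫) → ∀ v : E, ⟪T v, v⟫ = 0 → T v = 0 := by
    intro T Tsa Tpos v hv
    by_contra hne
    set a : ℝ := ⟪T (T v), T v⟫ with haa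
    set c : ℝ := ‖T v‖^2 with hcc
    have ha : 0 ≤ a := Tpos (T v)
    have hc : 0 < c := by
      rw [hcc]
      exact pow_pos (norm_pos_iff.mpr hne) 2
    have key : ∀ t : ℝ, 0 ≤ a * t^2 + 2 * c * t := by
      intro t
      have h0 := Tpos (v + t • T v)
      simp only [map_add, map_smul, inner_add_left, inner_add_right,
        real_inner_smul_left, real_inner_smul_right] at h0
      have h1 : ⟪T (T v), v⟫ = ⟪T v, T v⟫ := Tsa (T v) v
      have h2 : ⟪T v, T v⟫ = c := real_inner_self_eq_norm_sq (T v)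
      rw [hv, h1, h2, ← haa] at h0
      nlinarith [h0]
    have ha1 : (0:ℝ) < a + 1 := by linarith
    have hu : 0 < c / (a + 1) := div_pos hc ha1
    have ht := key (-(c / (a + 1)))
    have h9 : a * (c / (a + 1)) < 2 * c := by
      have hlt : a / (a + 1) < 1 := by rw [div_lt_one ha1]; linarith
      calc a * (c / (a + 1)) = (a / (a + 1)) * c := by ring
      _ < 1 * c := mul_lt_mul_of_pos_right hlt hc
      _ < 2 * c := by linarith
    nlinarith [ht, h9, hu]
  -- S := R + Q, D := R - Q, S anticommutes with D
  set S : E →ₗ[ℝ] E := R + Q with hS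
  set D : E →ₗ[ℝ] E := R - Q with hD
  have hSapp : ∀ v, S v = R v + Q v := fun v => rfl
  have hDapp : ∀ v, D v = R v - Q v := fun v => rfl
  have anti : ∀ v, S (D v) + D (S v) = 0 := by
    intro v
    have h2 := Rsq v
    simp only [hSapp, hDapp, map_add, map_sub]
    rw [h2]
    abel
  have Dsa : D.IsSymmetric := by
    intro v w
    simp only [hDapp, inner_sub_left, inner_sub_right, Rsa, hQsa]
  have Spos : ∀ v : E, 0 ≤ ⟪S v, v⟫ := by
    intro v
    rw [hSapp, inner_add_left]
    exact add_nonneg (Rpos v) (hQpos v)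
  have Ssa : ∀ v w : E, ⟪S v, w⟫ = ⟪v, S w⟫ := by
    intro v w
    simp only [hSapp, inner_add_left, inner_add_right, Rsa, hQsa]
  have Sdef : ∀ v : E, v ≠ 0 → 0 < ⟪S v, v⟫ := by
    intro v hv
    rcases lt_or_eq_of_le (Spos v) with h | h
    · exact h
    · exfalso
      have hz : S v = 0 := posdef S Ssa Spos v h.symm
      have hQz : Q v = 0 := by
        have hq0 : ⟪Q v, v⟫ = 0 := by
          have hr := Rpos v; have hq := hQpos v
          have hs : ⟪R v, v⟫ + ⟪Q v, v⟫ = 0 := by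
            rw [← inner_add_left, ← hSapp, hz, inner_zero_left]
          linarith
        exact posdef Q hQsa hQpos v hq0
      exact hv (Qinj (by rw [hQz, map_zero]))
  -- D = 0 via the spectral theorem
  have Dzero : D = 0 := by
    have hn : Module.finrank ℝ E = Module.finrank ℝ E := rfl
    have hzero : ∀ i, D (Dsa.eigenvectorBasis hn i) = 0 := by
      intro i
      set v : E := Dsa.eigenvectorBasis hn i with hvdef
      set m : ℝ := Dsa.eigenvalues hn i with hmdef
      have hv : D v = m • v := Dsa.apply_eigenvectorBasis hn i
      have hbne : v ≠ 0 := (Dsa.eigenvectorBasis hn).toBasis.ne_zero i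
      have hdd : D (D v) = (m * m) • v := by rw [hv, map_smul, hv, smul_smul]
      have e1 : ⟪S (D v), D v⟫ = m^2 * ⟪S v, v⟫ := by
        rw [hv, map_smul, real_inner_smul_left, real_inner_smul_right]; ring
      have e2 : ⟪D (S v), D v⟫ = m^2 * ⟪S v, v⟫ := by
        calc ⟪D (S v), D v⟫ = ⟪S v, D (D v)⟫ := Dsa (S v) (D v)
        _ = ⟪S v, (m * m) • v⟫ := by rw [hdd]
        _ = m^2 * ⟪S v, v⟫ := by rw [real_inner_smul_right]; ring
      have hsum : ⟪S (D v) + D (S v), D v⟫ = 0 := by rw [anti v, inner_zero_left]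
      rw [inner_add_left, e1, e2] at hsum
      have hspos := Sdef v hbne
      have h7 : m ^ 2 * ⟪S v, v⟫ = 0 := by linarith
      have h8 : m ^ 2 = 0 := by
        rcases mul_eq_zero.mp h7 with h | h
        · exact h
        · exact absurd h hspos.ne'
      have h6 : m = 0 := by
        have := sq_nonneg m
        nlinarith [h8]
      rw [hv, h6, zero_smul]
    apply (Dsa.eigenvectorBasis hn).toBasis.ext
    intro i
    simpa using hzero i
  -- hence R = Q, i.e. A (Qi (A v)) = -Q v
  have hRQ : ∀ v, A (Qi (A v)) = -Q v := by
    intro v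
    have hdv : D v = 0 := by rw [Dzero]; rfl
    rw [hDapp] at hdv
    have h7 : R v = Q v := sub_eq_zero.mp hdv
    rw [hRapp] at h7
    exact neg_eq_iff_eq_neg.mp h7
  -- uniqueness of J pointwise
  have Juniq : ∀ J : E →ₗ[ℝ] E, Q ∘ₗ J = A → ∀ v, J v = Qi (A v) := by
    intro J hJ v
    have h1 : Q (J v) = A v := by
      have := congrFun (congrArg (fun f => f.toFun) hJ) v
      simpa using this
    apply Qinj
    rw [h1, hQQi]
  constructor
  · refine ⟨Qi ∘ₗ A, ?_⟩
    apply LinearMap.ext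
    intro v
    simpa using hQQi (A v)
  · intro J hJ
    have hJv := Juniq J hJ
    constructor
    · apply LinearMap.ext
      intro v
      have : J (J v) = Qi (A (Qi (A v))) := by rw [hJv, hJv]
      rw [LinearMap.comp_apply, this, hRQ, map_neg, hQiQ]
      simp
    · intro v w
      rw [hJv, hJv]
      have hy : Qi (Qi (A w)) = -(ae.symm w) := by
        apply Qinj; apply Qinj
        have haw : A (ae.symm w) = w := ae.apply_symm_apply w
        rw [hQQi, hQQi, map_neg, map_neg, hsq, neg_neg, haw]
      calc ⟪Qi (A v), Qi (A w)⟫ = ⟪A v, Qi (Qi (A w))⟫ := Qisa _ _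
      _ = ⟪A v, -(ae.symm w)⟫ := by rw [hy]
      _ = -⟪A v, ae.symm w⟫ := by rw [inner_neg_right]
      _ = ⟪v, A (ae.symm w)⟫ := by rw [hskew]; ring
      _ = ⟪v, w⟫ := by
        have haw : A (ae.symm w) = w := ae.apply_symm_apply w
        rw [haw]
end

section
/- Let E be a finite-dimensional real inner product space, ω an alternating bilinear form on E whose associated map A (defined by ω(v,w) = ⟨A v, w⟩) is injective, Q the positive self-adjoint square root of −A², and J := Q⁻¹ ∘ A. Define g_J(v,w) := ω(v, J w). Then g_J(v,w) = ⟨Q v, w⟩ for all v, w; g_J is a symmetric positive-definite bilinear form (an inner product) on E; J is compatible with g_J and ω, i.e. g_J(J v, J w) = g_J(v, w) and ω(J v, J w) = ω(v, w) for all v, w ∈ E; and ω(v,w) = g_J(J v, w) for all v, w ∈ E. -/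
open RealInnerProductSpace

set_option linter.unnecessarySimpa false in
/-- Uniqueness of the positive square root of a positive operator. -/
lemma my_sqrt_unique {E : Type*} [NormedAddCommGroup E] [InnerProductSpace ℝ E]
    [FiniteDimensional ℝ E]
    (P S : E →ₗ[ℝ] E)
    (hPpos : ∀ v : E, 0 ≤ ⟪P v, v⟫)
    (hSsym : ∀ v w : E, ⟪S v, w⟫ = ⟪v, S w⟫)
    (hSpos : ∀ v : E, 0 ≤ ⟪S v, v⟫)
    (hSinj : Function.Injective S)
    (hsq : P ∘ₗ P = S ∘ₗ S) : P = S := by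
  have hS : S.IsSymmetric := fun v w => hSsym v w
  have hn : Module.finrank ℝ E = Module.finrank ℝ E := rfl
  set b := hS.eigenvectorBasis hn with hb
  have key : ∀ i, P (b i) = S (b i) := by
    intro i
    set μ := hS.eigenvalues hn i with hμ
    have hbe : S (b i) = μ • b i := by
      have := hS.apply_eigenvectorBasis hn i
      rw [hb]; exact this.trans (by simp [hμ])
    have hb0 : b i ≠ 0 := b.toBasis.ne_zero i
    have hbn : ⟪b i, b i⟫ = 1 := by
      have h := b.orthonormal.1 i
      rw [real_inner_self_eq_norm_sq, h]; norm_num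
    have h0 : ⟪S (b i), b i⟫ = μ := by
      rw [hbe, real_inner_smul_left, hbn, mul_one]
    have hμpos : 0 < μ := by
      rcases lt_or_eq_of_le (h0 ▸ hSpos (b i)) with h | h
      · exact h
      · exact absurd (hSinj (by rw [hbe, ← h, zero_smul, map_zero])) hb0
    have hPP : P (P (b i)) = (μ * μ) • b i := by
      have h := LinearMap.ext_iff.mp hsq (b i)
      simp only [LinearMap.comp_apply] at h
      rw [h, hbe, map_smul, hbe, smul_smul]
    set u := P (b i) - μ • b i with hu
    have h1 : P u + μ • u = 0 := by
      simp only [hu, map_sub, map_smul, smul_sub, hPP, smul_smul]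
      module
    have h2 : ⟪P u, u⟫ + μ * ⟪u, u⟫ = 0 := by
      have := congrArg (fun x => ⟪x, u⟫) h1
      simpa [inner_add_left, real_inner_smul_left] using this
    have h3 : u = 0 := by
      rw [← inner_self_eq_zero (𝕜 := ℝ)]
      nlinarith [hPpos u, real_inner_self_nonneg (x := u)]
    have h4 : P (b i) = μ • b i := by
      have := sub_eq_zero.mp h3
      simpa using this
    rw [h4, ← hbe]
  exact b.toBasis.ext fun i => by simpa using key i

/-- With `ω` alternating, `A` its associated (injective) map, `Q` the positive
self-adjoint square root of `−A²` and `J := Q⁻¹ ∘ A`, the form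
`g_J (v, w) := ω (v, J w)` equals `⟪Q v, w⟫`, is a symmetric positive-definite
bilinear form, `J` is compatible with `g_J` and `ω`, and `ω (v, w) = g_J (J v, w)`. -/
theorem stmt9 {E : Type*} [NormedAddCommGroup E] [InnerProductSpace ℝ E]
    [FiniteDimensional ℝ E]
    (ω : E →ₗ[ℝ] E →ₗ[ℝ] ℝ) (hω : ∀ v : E, ω v v = 0)
    (A : E →ₗ[ℝ] E) (hA : ∀ v w : E, ω v w = ⟪A v, w⟫)
    (hinj : Function.Injective A)
    (Q : E →ₗ[ℝ] E) (hQsa : ∀ v w : E, ⟪Q v, w⟫ = ⟪v, Q w⟫)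
    (hQpos : ∀ v : E, 0 ≤ ⟪Q v, v⟫)
    (hQsq : Q ∘ₗ Q = -(A ∘ₗ A))
    (J : E →ₗ[ℝ] E) (hJ : Q ∘ₗ J = A)
    (gJ : E → E → ℝ) (hgJ : ∀ v w : E, gJ v w = ω v (J w)) :
    (∀ v w : E, gJ v w = ⟪Q v, w⟫) ∧
    (∀ v w : E, gJ v w = gJ w v) ∧
    (∀ v : E, v ≠ 0 → 0 < gJ v v) ∧
    (∀ v w : E, gJ (J v) (J w) = gJ v w) ∧
    (∀ v w : E, ω (J v) (J w) = ω v w) ∧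
    (∀ v w : E, ω v w = gJ (J v) w) := by
  -- A is skew-adjoint
  have hskew : ∀ v w : E, ⟪A v, w⟫ = -⟪v, A w⟫ := by
    intro v w
    have h2 := hω (v + w)
    simp only [map_add, LinearMap.add_apply, hω] at h2
    have h : ω v w + ω w v = 0 := by linarith
    rw [hA, hA] at h
    have hc := real_inner_comm (A w) v
    linarith
  have hQQ : ∀ x, Q (Q x) = -(A (A x)) := by
    intro x
    have := LinearMap.ext_iff.mp hQsq x
    simpa using this
  have hQinj : Function.Injective Q := by
    rw [injective_iff_map_eq_zero]
    intro x hx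
    have h1 : Q (Q x) = 0 := by rw [hx, map_zero]
    rw [hQQ, neg_eq_zero] at h1
    exact hinj (by rw [map_zero]; exact hinj (by rw [map_zero]; exact h1))
  -- inverse of Q
  set Qe := LinearEquiv.ofInjectiveEndo Q hQinj with hQe
  set N : E →ₗ[ℝ] E := Qe.symm.toLinearMap with hN
  have hNQ : ∀ x, N (Q x) = x := by
    intro x
    have : Qe x = Q x := congrFun (LinearEquiv.coe_ofInjectiveEndo Q hQinj) x
    rw [hN, ← this]; exact Qe.symm_apply_apply x
  have hQN : ∀ x, Q (N x) = x := by
    intro x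
    have h := Qe.apply_symm_apply x
    have : Qe (Qe.symm x) = Q (N x) := congrFun (LinearEquiv.coe_ofInjectiveEndo Q hQinj) _
    rw [← this]; exact h
  have hNsym : ∀ x y : E, ⟪N x, y⟫ = ⟪x, N y⟫ := by
    intro x y
    conv_lhs => rw [← hQN y]
    rw [← hQsa, hQN]
  have hNpos : ∀ x : E, 0 ≤ ⟪N x, x⟫ := by
    intro x
    have h2 : (0:ℝ) ≤ ⟪Q (N x), N x⟫ := hQpos _
    rw [hQsa, hQN] at h2
    exact h2
  -- the candidate square root S = -(A ∘ N ∘ A)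
  set S : E →ₗ[ℝ] E := -(A ∘ₗ (N ∘ₗ A)) with hS
  have hSapp : ∀ v, S v = -(A (N (A v))) := fun v => rfl
  have hSinner : ∀ v w : E, ⟪S v, w⟫ = ⟪N (A v), A w⟫ := by
    intro v w
    rw [hSapp, inner_neg_left, hskew, neg_neg]
  have hSsym : ∀ v w : E, ⟪S v, w⟫ = ⟪v, S w⟫ := by
    intro v w
    calc ⟪S v, w⟫ = ⟪N (A v), A w⟫ := hSinner v w
      _ = ⟪A v, N (A w)⟫ := hNsym _ _
      _ = -⟪v, A (N (A w))⟫ := hskew v (N (A w))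
      _ = ⟪v, S w⟫ := by rw [hSapp w, inner_neg_right]
  have hSpos : ∀ v : E, 0 ≤ ⟪S v, v⟫ := by
    intro v; rw [hSinner]; exact hNpos _
  have hAA : ∀ x, A (A x) = -(Q (Q x)) := fun x => by rw [hQQ, neg_neg]
  have hsq : S ∘ₗ S = Q ∘ₗ Q := by
    ext v
    simp only [LinearMap.comp_apply]
    rw [hSapp (S v), hSapp v]
    simp only [map_neg, neg_neg, hAA, hQN, hNQ]
  have hSQ : S = Q := my_sqrt_unique S Q hSpos hQsa hQpos hQinj hsq
  have hAN : ∀ v, A (N (A v)) = -(Q v) := by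
    intro v
    have := LinearMap.ext_iff.mp hSQ v
    rw [hSapp] at this
    rw [← this, neg_neg]
  have hJv : ∀ v, J v = N (A v) := by
    intro v
    have : Q (J v) = A v := LinearMap.ext_iff.mp hJ v
    rw [← this, hNQ]
  have hQJ : ∀ v, Q (J v) = A v := fun v => LinearMap.ext_iff.mp hJ v
  have hAJ : ∀ v, A (J v) = -(Q v) := fun v => by rw [hJv]; exact hAN v
  have hJJ : ∀ v, J (J v) = -v := by
    intro v
    rw [hJv (J v), hAJ, map_neg, hNQ]
  -- the six goals
  have g1 : ∀ v w : E, gJ v w = ⟪Q v, w⟫ := by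
    intro v w
    rw [hgJ, hA, hskew, hAJ, inner_neg_right, neg_neg, hQsa]
  refine ⟨g1, ?_, ?_, ?_, ?_, ?_⟩
  · intro v w
    rw [g1, g1, hQsa, real_inner_comm]
  · intro v hv
    rw [g1]
    have hQv : Q v ≠ 0 := fun h => hv (hQinj (by rw [h, map_zero]))
    rcases lt_or_eq_of_le (hQpos v) with h | h
    · exact h
    · exfalso
      apply hQv
      -- from ⟪Q v, v⟫ = 0 deduce Q v = 0
      have hkey := hQpos
        (v + (-(⟪Q v, Q v⟫ / (⟪Q (Q v), Q v⟫ + 1))) • Q v)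
      simp only [map_add, map_smul, inner_add_left, inner_add_right,
        real_inner_smul_left, real_inner_smul_right] at hkey
      rw [hQsa (Q v) v, ← h] at hkey
      have hc : (0:ℝ) ≤ ⟪Q (Q v), Q v⟫ := hQpos (Q v)
      set X := ⟪Q v, Q v⟫ with hX
      set C := ⟪Q (Q v), Q v⟫ with hC
      have hC1 : (0:ℝ) < C + 1 := by linarith
      have hd2 : X / (C + 1) * X = X / (C + 1) * (X / (C + 1)) * (C + 1) := by
        field_simp
      have hdd : X / (C + 1) * (X / (C + 1)) ≤ 0 := by
        nlinarith [hkey, hd2, hc, sq_nonneg (X / (C + 1))]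
      have hd0 : X / (C + 1) = 0 :=
        mul_self_eq_zero.mp (le_antisymm hdd (mul_self_nonneg _))
      have hX0 : X = 0 := by
        rcases div_eq_zero_iff.mp hd0 with h' | h'
        · exact h'
        · linarith
      rw [← inner_self_eq_zero (𝕜 := ℝ), ← hX]
      exact hX0
  · intro v w
    rw [g1, hQJ, ← hA, ← hgJ]
  · intro v w
    rw [hA, hAJ, inner_neg_left, ← g1, hgJ, hJJ, map_neg, neg_neg]
  · intro v w
    rw [g1, hQJ, hA]
end

section
/- Let E be a finite-dimensional real inner product space, ω an alternating bilinear form on E with comass at most 1 whose associated map A (defined by ω(v,w) = ⟨A v, w⟩) is injective, Q the positive self-adjoint square root of −A², J := Q⁻¹ ∘ A, and g_J(v,w) := ω(v, J w). Then g_J(v,v) ≤ ⟨v, v⟩ for every v ∈ E, i.e. the new inner product g_J is dominated by the original one. -/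
open RealInnerProductSpace

/-- If moreover `ω` has comass at most 1, then the new inner product
`g_J (v, w) := ω (v, J w)` is dominated by the original one:
`g_J (v, v) ≤ ⟪v, v⟫` for all `v`. -/
theorem stmt10 {E : Type*} [NormedAddCommGroup E] [InnerProductSpace ℝ E]
    [FiniteDimensional ℝ E]
    (ω : E →ₗ[ℝ] E →ₗ[ℝ] ℝ) (hω : ∀ v : E, ω v v = 0)
    (hcomass : ∀ v w : E, (ω v w) ^ 2 ≤ ‖v‖ ^ 2 * ‖w‖ ^ 2 - ⟪v, w⟫ ^ 2)
    (A : E →ₗ[ℝ] E) (hA : ∀ v w : E, ω v w = ⟪A v, w⟫)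
    (hinj : Function.Injective A)
    (Q : E →ₗ[ℝ] E) (hQsa : ∀ v w : E, ⟪Q v, w⟫ = ⟪v, Q w⟫)
    (hQpos : ∀ v : E, 0 ≤ ⟪Q v, v⟫)
    (hQsq : Q ∘ₗ Q = -(A ∘ₗ A))
    (J : E →ₗ[ℝ] E) (hJ : Q ∘ₗ J = A)
    (gJ : E → E → ℝ) (hgJ : ∀ v w : E, gJ v w = ω v (J w)) :
    ∀ v : E, gJ v v ≤ ⟪v, v⟫ := by
  -- ω is antisymmetric
  have hanti : ∀ v w : E, ω v w = -ω w v := by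
    intro v w
    have h := hω (v + w)
    simp only [map_add, LinearMap.add_apply, hω] at h
    linarith
  -- A is skew-adjoint
  have hskew : ∀ v w : E, ⟪A v, w⟫ = -⟪A w, v⟫ := by
    intro v w
    rw [← hA, ← hA, hanti]
  -- ‖A x‖ = ‖Q x‖
  have hAQ : ∀ x : E, ‖A x‖ = ‖Q x‖ := by
    intro x
    have h1 : Q (Q x) = -(A (A x)) := by
      have := congrArg (fun f : E →ₗ[ℝ] E => f x) hQsq
      simpa using this
    have h2 : ⟪A x, A x⟫ = ⟪Q x, Q x⟫ := by
      have e1 : ⟪A (A x), x⟫ = -⟪A x, A x⟫ := hskew (A x) x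
      have e2 : ⟪Q (Q x), x⟫ = ⟪Q x, Q x⟫ := hQsa (Q x) x
      rw [h1, inner_neg_left] at e2
      linarith
    have := congrArg Real.sqrt h2
    rwa [real_inner_self_eq_norm_sq, real_inner_self_eq_norm_sq,
      Real.sqrt_sq (norm_nonneg _), Real.sqrt_sq (norm_nonneg _)] at this
  -- ‖A v‖ ≤ ‖v‖ from comass ≤ 1
  have hAle : ∀ v : E, ‖A v‖ ≤ ‖v‖ := by
    intro v
    have h := hcomass v (A v)
    rw [hA, real_inner_self_eq_norm_sq] at h
    have h4 : ‖A v‖ ^ 2 * ‖A v‖ ^ 2 ≤ ‖v‖ ^ 2 * ‖A v‖ ^ 2 := by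
      nlinarith [sq_nonneg (⟪v, A v⟫ : ℝ)]
    by_cases hz : ‖A v‖ = 0
    · rw [hz]; exact norm_nonneg v
    · have hpos : 0 < ‖A v‖ ^ 2 :=
        pow_pos (lt_of_le_of_ne (norm_nonneg _) (Ne.symm hz)) 2
      have h5 : ‖A v‖ ^ 2 ≤ ‖v‖ ^ 2 := le_of_mul_le_mul_right
        (by linarith [h4]) hpos
      nlinarith [norm_nonneg (A v), norm_nonneg v]
  intro v
  have hQJ : Q (J v) = A v := by
    have := congrArg (fun f : E →ₗ[ℝ] E => f v) hJ
    simpa using this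
  calc gJ v v = -⟪A (J v), v⟫ := by
        rw [hgJ, hA, hskew]
    _ ≤ ‖A (J v)‖ * ‖v‖ := by
        have := abs_real_inner_le_norm (A (J v)) v
        have h := neg_abs_le (⟪A (J v), v⟫ : ℝ)
        linarith
    _ = ‖A v‖ * ‖v‖ := by rw [hAQ, hQJ]
    _ ≤ ‖v‖ * ‖v‖ := by
        exact mul_le_mul_of_nonneg_right (hAle v) (norm_nonneg v)
    _ = ⟪v, v⟫ := (real_inner_self_eq_norm_mul_norm v).symm
end

section
/- Let E be a finite-dimensional real inner product space and J : E → E a linear map with J² = −Id which is an isometry (⟨J v, J w⟩ = ⟨v, w⟩ for all v, w). Define ω(v,w) := ⟨J v, w⟩. Then ω is an alternating bilinear form of comass at most 1: ω(v,w)² ≤ ‖v‖²‖w‖² − ⟨v,w⟩² for all v, w ∈ E (Wirtinger inequality in degree 2). -/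
open RealInnerProductSpace

/-- Wirtinger inequality in degree 2: if `J` is an isometric complex structure on a
real inner product space `E`, then `ω (v, w) := ⟪J v, w⟫` is an alternating bilinear
form of comass at most 1. -/
theorem stmt11 {E : Type*} [NormedAddCommGroup E] [InnerProductSpace ℝ E]
    [FiniteDimensional ℝ E]
    (J : E →ₗ[ℝ] E) (hJ2 : J ∘ₗ J = -LinearMap.id)
    (hJiso : ∀ v w : E, ⟪J v, J w⟫ = ⟪v, w⟫)
    (ω : E → E → ℝ) (hω : ∀ v w : E, ω v w = ⟪J v, w⟫) :
    (∀ v : E, ω v v = 0) ∧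
    (∀ v w : E, (ω v w) ^ 2 ≤ ‖v‖ ^ 2 * ‖w‖ ^ 2 - ⟪v, w⟫ ^ 2) := by
  have hJJ : ∀ v : E, J (J v) = -v := by
    intro v
    have := congrArg (fun f => f v) hJ2
    simpa using this
  have halt : ∀ v : E, ⟪J v, v⟫ = 0 := by
    intro v
    have h1 : ⟪J v, v⟫ = ⟪(-v : E), J v⟫ := by
      rw [← hJJ v, hJiso]
    have h2 : ⟪(-v : E), J v⟫ = -⟪v, J v⟫ := by simp
    have h3 : ⟪v, J v⟫ = ⟪J v, v⟫ := real_inner_comm _ _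
    linarith [h1, h2 ▸ h1, h3]
  refine ⟨fun v => by rw [hω]; exact halt v, fun v w => ?_⟩
  rw [hω]
  by_cases hv : v = 0
  · simp [hv, sq_nonneg]
  have hn : (0:ℝ) < ‖v‖ ^ 2 := by have := norm_pos_iff.mpr hv; positivity
  set a := ⟪v, w⟫ with ha
  set b := ⟪J v, w⟫ with hb
  set n := ‖v‖ ^ 2 with hndef
  have hJn : ⟪J v, J v⟫ = n := by rw [hJiso]; exact real_inner_self_eq_norm_sq v
  have hvv : ⟪v, v⟫ = n := real_inner_self_eq_norm_sq v
  have key : (0:ℝ) ≤ ‖n • w - a • v - b • J v‖ ^ 2 := sq_nonneg _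
  rw [← real_inner_self_eq_norm_sq] at key
  have hexp : ⟪n • w - a • v - b • J v, n • w - a • v - b • J v⟫ =
      n * n * ‖w‖^2 - n * a^2 - n * b^2 := by
    have hwv : ⟪w, v⟫ = a := real_inner_comm _ _
    have hwJ : ⟪w, J v⟫ = b := real_inner_comm _ _
    have hvJ : ⟪v, J v⟫ = 0 := by rw [real_inner_comm]; exact halt v
    have hJv : ⟪J v, v⟫ = 0 := halt v
    have hww : ⟪w, w⟫ = ‖w‖^2 := real_inner_self_eq_norm_sq w
    simp only [inner_sub_left, inner_sub_right, real_inner_smul_left, real_inner_smul_right,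
      hww, hvv, hJn, hvJ, hJv, hwv, hwJ, ← ha, ← hb]
    ring
  rw [hexp] at key
  nlinarith [key, hn]
end

section
/- Let E be a finite-dimensional real vector space equipped with two inner products g and g' such that g'(v,v) ≤ g(v,v) for all v ∈ E. Then for all v, w ∈ E the squared 2-dimensional areas compare: g'(v,v) g'(w,w) − g'(v,w)² ≤ g(v,v) g(w,w) − g(v,w)². Consequently, if an alternating bilinear form ω satisfies ω(v,w)² ≤ g'(v,v) g'(w,w) − g'(v,w)² for all v, w (comass at most 1 with respect to g'), then ω(v,w)² ≤ g(v,v) g(w,w) − g(v,w)² for all v, w (comass at most 1 with respect to g). -/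
/-- Degree-2 comass comparison (Harvey–Lawson, Theorem 6.11, degree 2): if `g` and
`g'` are inner products on a finite-dimensional real vector space with
`g' (v, v) ≤ g (v, v)` for all `v`, then the Gram determinants compare, and hence
any alternating bilinear form of comass at most 1 with respect to `g'` has comass
at most 1 with respect to `g`. -/
theorem stmt14 {E : Type*} [AddCommGroup E] [Module ℝ E] [FiniteDimensional ℝ E]
    (g g' : E →ₗ[ℝ] E →ₗ[ℝ] ℝ)
    (hgsymm : ∀ v w : E, g v w = g w v) (hgpos : ∀ v : E, v ≠ 0 → 0 < g v v)
    (hg'symm : ∀ v w : E, g' v w = g' w v) (hg'pos : ∀ v : E, v ≠ 0 → 0 < g' v v)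
    (hle : ∀ v : E, g' v v ≤ g v v) :
    (∀ v w : E, g' v v * g' w w - (g' v w) ^ 2 ≤ g v v * g w w - (g v w) ^ 2) ∧
    (∀ ω : E →ₗ[ℝ] E →ₗ[ℝ] ℝ, (∀ v : E, ω v v = 0) →
      (∀ v w : E, (ω v w) ^ 2 ≤ g' v v * g' w w - (g' v w) ^ 2) →
      ∀ v w : E, (ω v w) ^ 2 ≤ g v v * g w w - (g v w) ^ 2) := by
  have hg'nn : ∀ u : E, 0 ≤ g' u u := by
    intro u
    rcases eq_or_ne u 0 with h | h
    · simp [h]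
    · exact (hg'pos u h).le
  have key : ∀ v w : E, g' v v * g' w w - (g' v w) ^ 2 ≤ g v v * g w w - (g v w) ^ 2 := by
    intro v w
    rcases eq_or_ne v 0 with hv | hv
    · simp [hv]
    · have ha : 0 < g v v := hgpos v hv
      set t : ℝ := g v w / g v v with ht
      set w' : E := w - t • v with hw'
      have ht' : t * g v v = g v w := by
        rw [ht, div_mul_cancel₀ _ ha.ne']
      have hq : g w' w' = g w w - 2 * t * g v w + t ^ 2 * g v v := by
        simp only [hw', map_sub, map_smul, LinearMap.sub_apply, LinearMap.smul_apply,
          smul_eq_mul]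
        rw [hgsymm w v]
        ring
      have hq' : g' w' w' = g' w w - 2 * t * g' v w + t ^ 2 * g' v v := by
        simp only [hw', map_sub, map_smul, LinearMap.sub_apply, LinearMap.smul_apply,
          smul_eq_mul]
        rw [hg'symm w v]
        ring
      have h1 : g' w' w' ≤ g w' w' := hle w'
      have h2 : 0 ≤ g' w' w' := hg'nn w'
      have h3 : g' v v ≤ g v v := hle v
      have h4 : 0 ≤ g' v v := hg'nn v
      have h5 : (0:ℝ) ≤ (g' v w - t * g' v v) ^ 2 := sq_nonneg _
      nlinarith [mul_nonneg h4 (sub_nonneg.mpr h1), mul_nonneg h2 (sub_nonneg.mpr h3),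
        mul_le_mul_of_nonneg_left h1 h4]
  refine ⟨key, fun ω _ hω v w => le_trans (hω v w) (key v w)⟩
end

section
/- Let E be a finite-dimensional real inner product space and A : E → E an injective skew-adjoint linear map. Then the dimension of E is even, say 2m, and there exist vectors v₁, …, v_m ∈ E and positive reals λ₁, …, λ_m such that −A² v_i = λ_i v_i for each i and the collection {v₁, A v₁/√λ₁, v₂, A v₂/√λ₂, …, v_m, A v_m/√λ_m} is an orthonormal basis of E (canonical form of a skew-adjoint operator). -/
open RealInnerProductSpace

theorem stmt15_aux : ∀ (n : ℕ) {E : Type*} [NormedAddCommGroup E] [InnerProductSpace ℝ E]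
    [FiniteDimensional ℝ E]
    (A : E →ₗ[ℝ] E), Module.finrank ℝ E = n →
    (∀ v w : E, ⟪A v, w⟫ = -⟪v, A w⟫) → Function.Injective A →
    ∃ m : ℕ, Module.finrank ℝ E = 2 * m ∧
      ∃ (v : Fin m → E) (lam : Fin m → ℝ),
        (∀ i : Fin m, 0 < lam i) ∧
        (∀ i : Fin m, (-(A ∘ₗ A)) (v i) = lam i • v i) ∧
        ∃ b : OrthonormalBasis (Fin m ⊕ Fin m) ℝ E,
          (∀ i : Fin m, b (Sum.inl i) = v i) ∧
          (∀ i : Fin m, b (Sum.inr i) = (Real.sqrt (lam i))⁻¹ • A (v i)) := by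
  intro n
  induction n using Nat.strong_induction_on with
  | _ n IH =>
  intro E _ _ _ A hn hskew hinj
  rcases Nat.eq_zero_or_pos n with hn0 | hnpos
  · -- trivial case
    subst hn0
    have hsub : Subsingleton E := Module.finrank_zero_iff.mp hn
    refine ⟨0, by simp [hn], Fin.elim0, Fin.elim0, fun i => i.elim0, fun i => i.elim0, ?_⟩
    have horth : Orthonormal ℝ (fun i : Fin 0 ⊕ Fin 0 => (0 : E)) := by
      constructor <;> intro i <;> exact i.elim (Fin.elim0) (Fin.elim0)
    have hsp : (⊤ : Submodule ℝ E) ≤ Submodule.span ℝ (Set.range fun i : Fin 0 ⊕ Fin 0 => (0 : E)) :=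
      le_of_eq (Subsingleton.elim _ _)
    refine ⟨OrthonormalBasis.mk horth hsp, fun i => i.elim0, fun i => i.elim0⟩
  · -- main case
    set S : E →ₗ[ℝ] E := -(A ∘ₗ A) with hSdef
    have hS : S.IsSymmetric := by
      intro x y
      simp only [hSdef, LinearMap.neg_apply, LinearMap.comp_apply, inner_neg_left,
        inner_neg_right]
      rw [hskew, hskew]; ring
    obtain ⟨k, rfl⟩ : ∃ k, n = k + 1 := ⟨n - 1, by omega⟩
    set bE := hS.eigenvectorBasis hn
    set v : E := bE ⟨0, Nat.succ_pos k⟩ with hvdef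
    set μ : ℝ := hS.eigenvalues hn ⟨0, Nat.succ_pos k⟩ with hμdef
    have hSv : S v = μ • v :=
      (hS.hasEigenvector_eigenvectorBasis hn ⟨0, Nat.succ_pos k⟩).apply_eq_smul
    have hv1 : ⟪v, v⟫ = 1 := by
      have := bE.orthonormal.1 ⟨0, Nat.succ_pos k⟩
      rw [real_inner_self_eq_norm_sq]; rw [this]; norm_num
    have hv0 : v ≠ 0 := by
      intro h
      rw [h] at hv1; simp at hv1
    have hAv0 : A v ≠ 0 := fun h => hv0 (hinj (by simpa using h))
    have hSvinner : ⟪A v, A v⟫ = μ := by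
      have h1 : ⟪S v, v⟫ = ⟪A v, A v⟫ := by
        simp only [hSdef, LinearMap.neg_apply, LinearMap.comp_apply, inner_neg_left]
        rw [hskew (A v) v]
        simp
      have h2 : ⟪S v, v⟫ = μ := by rw [hSv, real_inner_smul_left, hv1]; ring
      rw [← h1, h2]
    have hμpos : 0 < μ := by
      rcases (real_inner_self_nonneg (x := A v)).lt_or_eq with h | h
      · rwa [hSvinner] at h
      · exact absurd (inner_self_eq_zero.mp h.symm) hAv0
    have hsμ : Real.sqrt μ * Real.sqrt μ = μ := Real.mul_self_sqrt hμpos.le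
    have hsμ0 : Real.sqrt μ ≠ 0 := by positivity
    set w : E := (Real.sqrt μ)⁻¹ • A v with hwdef
    have hAv : A v = Real.sqrt μ • w := by
      rw [hwdef, smul_smul, mul_inv_cancel₀ hsμ0, one_smul]
    have hvAv : ⟪v, A v⟫ = 0 := by
      have h1 := hskew v v
      have h2 : ⟪v, A v⟫ = ⟪A v, v⟫ := by rw [real_inner_comm]
      linarith
    have hvw : ⟪v, w⟫ = 0 := by
      rw [hwdef, real_inner_smul_right, hvAv, mul_zero]
    have hwv : ⟪w, v⟫ = 0 := by rw [real_inner_comm]; exact hvw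
    have hww : ⟪w, w⟫ = 1 := by
      rw [hwdef, real_inner_smul_left, real_inner_smul_right, hSvinner, ← hsμ]
      field_simp
      rw [Real.sqrt_sq (Real.sqrt_nonneg _)]
    have hvn : ‖v‖ = 1 := by
      have := real_inner_self_eq_norm_sq v
      nlinarith [norm_nonneg v]
    have hwn : ‖w‖ = 1 := by
      have := real_inner_self_eq_norm_sq w
      nlinarith [norm_nonneg w]
    have hA2v : A (A v) = -(μ • v) := by
      have h : -(A (A v)) = μ • v := by
        have := hSv
        simp only [hSdef, LinearMap.neg_apply, LinearMap.comp_apply] at this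
        exact this
      rw [← neg_neg (A (A v)), h]
    have hAw : A w = -(Real.sqrt μ • v) := by
      rw [hwdef, map_smul, hA2v, smul_neg, smul_smul]
      congr 2
      field_simp
      rw [Real.sq_sqrt hμpos.le]
    set W : Submodule ℝ E := (ℝ ∙ v) ⊔ (ℝ ∙ w) with hWdef
    have hvW : v ∈ W := Submodule.mem_sup_left (Submodule.mem_span_singleton_self v)
    have hwW : w ∈ W := Submodule.mem_sup_right (Submodule.mem_span_singleton_self w)
    have hmemWo : ∀ x : E, x ∈ Wᗮ ↔ ⟪v, x⟫ = 0 ∧ ⟪w, x⟫ = 0 := by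
      intro x
      rw [hWdef, ← Submodule.inf_orthogonal, Submodule.mem_inf,
        Submodule.mem_orthogonal_singleton_iff_inner_right,
        Submodule.mem_orthogonal_singleton_iff_inner_right]
    have hAinv : ∀ x ∈ Wᗮ, A x ∈ Wᗮ := by
      intro x hx
      rw [hmemWo] at hx ⊢
      obtain ⟨hx1, hx2⟩ := hx
      constructor
      · rw [real_inner_comm, hskew, hAv, real_inner_smul_right, real_inner_comm, hx2]
        ring
      · rw [real_inner_comm, hskew, hAw, inner_neg_right, real_inner_smul_right,
          real_inner_comm, hx1]
        ring
    set A' : Wᗮ →ₗ[ℝ] Wᗮ := A.restrict hAinv with hA'def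
    have hA'coe : ∀ x : Wᗮ, (A' x : E) = A x := fun x => rfl
    have hskew' : ∀ x y : Wᗮ, ⟪A' x, y⟫ = -⟪x, A' y⟫ := by
      intro x y
      rw [Submodule.coe_inner, Submodule.coe_inner, hA'coe, hA'coe]
      exact hskew x y
    have hinj' : Function.Injective A' := by
      intro x y hxy
      have : (A' x : E) = A' y := by rw [hxy]
      rw [hA'coe, hA'coe] at this
      exact Subtype.ext (hinj this)
    -- dimension count
    have hpair : Orthonormal ℝ ![v, w] := by
      rw [orthonormal_iff_ite]
      intro i j
      fin_cases i <;> fin_cases j <;>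
        simp [hv1, hww, hvw, hwv, hvn, hwn]
    have hWrank : Module.finrank ℝ W = 2 := by
      have hr : W = Submodule.span ℝ (Set.range ![v, w]) := by
        have h1 : Set.range ![v, w] = {v, w} := by
          ext x
          constructor
          · rintro ⟨i, rfl⟩
            fin_cases i <;> simp
          · rintro (rfl | rfl)
            · exact ⟨0, rfl⟩
            · exact ⟨1, rfl⟩
        rw [hWdef, h1, Set.insert_eq, Submodule.span_union]
      rw [hr, finrank_span_eq_card hpair.linearIndependent]
      simp
    have hWorank : Module.finrank ℝ Wᗮ = k - 1 := by
      have := Submodule.finrank_add_finrank_orthogonal W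
      omega
    have hk1 : Module.finrank ℝ (↥Wᗮ) < k + 1 := by omega
    obtain ⟨m', hm', v', lam', hpos', heig', b', hb1', hb2'⟩ :=
      IH (k - 1) (Nat.lt_succ_of_le (Nat.sub_le k 1)) A' hWorank hskew' hinj'
    have hkeq : k + 1 = 2 * (m' + 1) := by
      have hfr := Submodule.finrank_add_finrank_orthogonal W
      omega
    refine ⟨m' + 1, by omega, Fin.cons v (fun i => (v' i : E)), Fin.cons μ lam', ?_, ?_, ?_⟩
    · intro i
      refine Fin.cases ?_ ?_ i
      · simpa using hμpos
      · intro j; simpa using hpos' j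
    · intro i
      refine Fin.cases ?_ ?_ i
      · simpa using hSv
      · intro j
        have := congrArg (Subtype.val : Wᗮ → E) (heig' j)
        simpa [hSdef, hA'def, LinearMap.restrict_coe_apply] using this
    · -- construct the orthonormal basis
      set f : (Fin (m' + 1) ⊕ Fin (m' + 1)) → E :=
        Sum.elim (Fin.cons v (fun i => ((b' (Sum.inl i)) : E)))
          (Fin.cons w (fun i => ((b' (Sum.inr i)) : E))) with hfdef
      have hq1 : ∀ x : Wᗮ, ⟪v, (x : E)⟫ = 0 := fun x => ((hmemWo x).mp x.2).1
      have hq2 : ∀ x : Wᗮ, ⟪w, (x : E)⟫ = 0 := fun x => ((hmemWo x).mp x.2).2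
      have hq1' : ∀ x : Wᗮ, ⟪(x : E), v⟫ = 0 := fun x => by rw [real_inner_comm]; exact hq1 x
      have hq2' : ∀ x : Wᗮ, ⟪(x : E), w⟫ = 0 := fun x => by rw [real_inner_comm]; exact hq2 x
      have hb'inner : ∀ p q, ⟪((b' p : Wᗮ) : E), ((b' q : Wᗮ) : E)⟫ = if p = q then 1 else 0 := by
        intro p q
        have := (orthonormal_iff_ite.mp b'.orthonormal) p q
        rwa [Submodule.coe_inner] at this
      have horth : Orthonormal ℝ f := by
        rw [orthonormal_iff_ite]
        rintro (i | i) (j | j)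
        · refine Fin.cases ?_ (fun i' => ?_) i <;> refine Fin.cases ?_ (fun j' => ?_) j
          · simp [hfdef, hv1, hvn]
          · simp [hfdef, hq1, (Fin.succ_ne_zero j').symm]
          · simp [hfdef, hq1', Fin.succ_ne_zero]
          · simpa [hfdef, Fin.succ_inj] using hb'inner (Sum.inl i') (Sum.inl j')
        · refine Fin.cases ?_ (fun i' => ?_) i <;> refine Fin.cases ?_ (fun j' => ?_) j
          · simp [hfdef, hvw]
          · simp [hfdef, hq1]
          · simp [hfdef, hq2']
          · simpa [hfdef] using hb'inner (Sum.inl i') (Sum.inr j')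
        · refine Fin.cases ?_ (fun i' => ?_) i <;> refine Fin.cases ?_ (fun j' => ?_) j
          · simp [hfdef, hwv]
          · simp [hfdef, hq2]
          · simp [hfdef, hq1']
          · simpa [hfdef] using hb'inner (Sum.inr i') (Sum.inl j')
        · refine Fin.cases ?_ (fun i' => ?_) i <;> refine Fin.cases ?_ (fun j' => ?_) j
          · simp [hfdef, hww, hwn]
          · simp [hfdef, hq2, (Fin.succ_ne_zero j').symm]
          · simp [hfdef, hq2', Fin.succ_ne_zero]
          · simpa [hfdef, Fin.succ_inj] using hb'inner (Sum.inr i') (Sum.inr j')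
      have hcard : Fintype.card (Fin (m' + 1) ⊕ Fin (m' + 1)) = Module.finrank ℝ E := by
        simp [hn, hkeq]; omega
      have hsp : (⊤ : Submodule ℝ E) ≤ Submodule.span ℝ (Set.range f) :=
        le_of_eq (horth.linearIndependent.span_eq_top_of_card_eq_finrank hcard).symm
      refine ⟨OrthonormalBasis.mk horth hsp, ?_, ?_⟩
      · intro i
        refine Fin.cases ?_ (fun j => ?_) i
        · simp [OrthonormalBasis.coe_mk, hfdef]
        · simp [OrthonormalBasis.coe_mk, hfdef, hb1']
      · intro i
        refine Fin.cases ?_ (fun j => ?_) i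
        · simp [OrthonormalBasis.coe_mk, hfdef, hwdef]
        · have := congrArg (Subtype.val : Wᗮ → E) (hb2' j)
          simp only [OrthonormalBasis.coe_mk, hfdef, Sum.elim_inr, Fin.cons_succ]
          rw [this]
          simp [hA'def, LinearMap.restrict_coe_apply]

/-- Canonical form of an injective skew-adjoint operator `A` on a finite-dimensional
real inner product space: `dim E = 2m` and there are vectors `v₁, …, v_m` and
positive reals `λ₁, …, λ_m` with `−A² vᵢ = λᵢ vᵢ` such that
`{v₁, A v₁/√λ₁, …, v_m, A v_m/√λ_m}` is an orthonormal basis of `E`. -/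
theorem stmt15 {E : Type*} [NormedAddCommGroup E] [InnerProductSpace ℝ E]
    [FiniteDimensional ℝ E]
    (A : E →ₗ[ℝ] E) (hskew : ∀ v w : E, ⟪A v, w⟫ = -⟪v, A w⟫)
    (hinj : Function.Injective A) :
    ∃ m : ℕ, Module.finrank ℝ E = 2 * m ∧
      ∃ (v : Fin m → E) (lam : Fin m → ℝ),
        (∀ i : Fin m, 0 < lam i) ∧
        (∀ i : Fin m, (-(A ∘ₗ A)) (v i) = lam i • v i) ∧
        ∃ b : OrthonormalBasis (Fin m ⊕ Fin m) ℝ E,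
          (∀ i : Fin m, b (Sum.inl i) = v i) ∧
          (∀ i : Fin m, b (Sum.inr i) = (Real.sqrt (lam i))⁻¹ • A (v i)) := by
  exact stmt15_aux (Module.finrank ℝ E) A rfl hskew hinj
end

section
/- (Pointwise version of the main theorem.) Let E be a real inner product space of even finite dimension, with inner product g = ⟨·,·⟩, and let ω be an alternating bilinear form on E of comass at most 1 with respect to g. Then there exist an inner product g_J on E, a linear map J : E → E with J² = −Id, and an alternating bilinear form Ω on E such that: (1) g_J(v,w) = Ω(v, J w) and Ω(v,w) = g_J(J v, w) for all v, w ∈ E; (2) g_J(J v, J w) = g_J(v, w) for all v, w ∈ E; (3) Ω has comass at most 1 with respect to g_J, i.e. Ω(v,w)² ≤ g_J(v,v) g_J(w,w) − g_J(v,w)² for all v, w; and (4) whenever v, w ∈ E are orthonormal with respect to g and ω(v,w) = 1, then v, w are also orthonormal with respect to g_J, Ω(v,w) = 1, and w = J v (so every 2-plane calibrated by ω in (E, g) is J-holomorphic and calibrated by Ω in (E, g_J)). -/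
open RealInnerProductSpace

noncomputable def JstdAux (k : ℕ) :
    EuclideanSpace ℝ (Fin k × Fin 2) →ₗ[ℝ] EuclideanSpace ℝ (Fin k × Fin 2) where
  toFun x := WithLp.toLp 2 (fun p : Fin k × Fin 2 => if p.2 = 0 then -x (p.1, 1) else x (p.1, 0))
  map_add' x y := by ext p; by_cases h : p.2 = 0 <;> simp [h] <;> ring
  map_smul' c x := by ext p; by_cases h : p.2 = 0 <;> simp [h] <;> ring

lemma JstdAux_sq (k : ℕ) (x : EuclideanSpace ℝ (Fin k × Fin 2)) :
    JstdAux k (JstdAux k x) = -x := by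
  ext p; obtain ⟨i, j⟩ := p; fin_cases j <;> simp [JstdAux]

lemma JstdAux_skew (k : ℕ) (x y : EuclideanSpace ℝ (Fin k × Fin 2)) :
    ⟪JstdAux k x, y⟫ = -⟪x, JstdAux k y⟫ := by
  simp only [PiLp.inner_apply, RCLike.inner_apply, conj_trivial]
  rw [Fintype.sum_prod_type, Fintype.sum_prod_type, ← Finset.sum_neg_distrib]
  exact Finset.sum_congr rfl fun i _ => by simp [Fin.sum_univ_two, JstdAux]

lemma real_inner_self_eq_zero_aux {E : Type*} [NormedAddCommGroup E]
    [InnerProductSpace ℝ E] {x : E} : ⟪x, x⟫ = 0 ↔ x = 0 :=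
  inner_self_eq_zero

lemma le_of_sq_le_sq_aux {s c d : ℝ} (h0 : 0 < s) (hcs : s * s ≤ s * c * d) :
    s ≤ c * d := by
  have := mul_le_mul_of_nonneg_left hcs (le_of_lt (inv_pos.mpr h0))
  rw [← mul_assoc, ← mul_assoc, inv_mul_cancel₀ (ne_of_gt h0), one_mul] at this
  nlinarith [this]

lemma exists_cplx_struct (F : Type*) [NormedAddCommGroup F] [InnerProductSpace ℝ F]
    [FiniteDimensional ℝ F] (h : Even (Module.finrank ℝ F)) :
    ∃ J : F →ₗ[ℝ] F, (∀ x, J (J x) = -x) ∧ (∀ x y : F, ⟪J x, y⟫ = -⟪x, J y⟫) := by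
  obtain ⟨k, hk⟩ := h
  have hk2 : k * 2 = Module.finrank ℝ F := by omega
  let b : OrthonormalBasis (Fin k × Fin 2) ℝ F :=
    (stdOrthonormalBasis ℝ F).reindex ((finCongr hk2.symm).trans finProdFinEquiv.symm)
  let e := b.repr
  refine ⟨(e.symm.toLinearEquiv.toLinearMap ∘ₗ JstdAux k) ∘ₗ e.toLinearEquiv.toLinearMap,
    ?_, ?_⟩
  · intro x
    simp only [LinearMap.coe_comp, Function.comp_apply, LinearEquiv.coe_coe,
      LinearIsometryEquiv.coe_toLinearEquiv]
    rw [e.apply_symm_apply, JstdAux_sq, map_neg, e.symm_apply_apply]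
  · intro x y
    simp only [LinearMap.coe_comp, Function.comp_apply, LinearEquiv.coe_coe,
      LinearIsometryEquiv.coe_toLinearEquiv]
    rw [← e.inner_map_map (e.symm (JstdAux k (e x))) y, e.apply_symm_apply,
      ← e.inner_map_map x (e.symm (JstdAux k (e y))), e.apply_symm_apply]
    exact JstdAux_skew k (e x) (e y)

set_option maxHeartbeats 1000000 in
/-- Pointwise version of the main theorem: any alternating bilinear form `ω` of
comass at most 1 on an even-dimensional real inner product space `(E, g)` admits an
inner product `g_J`, a complex structure `J` compatible with `g_J`, and an
alternating bilinear form `Ω` of comass at most 1 with respect to `g_J`, with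
`g_J (v, w) = Ω (v, J w)` and `Ω (v, w) = g_J (J v, w)`, such that every `2`-plane
calibrated by `ω` in `(E, g)` is `J`-holomorphic and calibrated by `Ω` in `(E, g_J)`. -/
theorem stmt17 {E : Type*} [NormedAddCommGroup E] [InnerProductSpace ℝ E]
    [FiniteDimensional ℝ E] (hdim : Even (Module.finrank ℝ E))
    (ω : E →ₗ[ℝ] E →ₗ[ℝ] ℝ) (hω : ∀ v : E, ω v v = 0)
    (hcomass : ∀ v w : E, (ω v w) ^ 2 ≤ ‖v‖ ^ 2 * ‖w‖ ^ 2 - ⟪v, w⟫ ^ 2) :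
    ∃ (gJ : E →ₗ[ℝ] E →ₗ[ℝ] ℝ) (J : E →ₗ[ℝ] E) (Ω : E →ₗ[ℝ] E →ₗ[ℝ] ℝ),
      -- g_J is an inner product
      (∀ v w : E, gJ v w = gJ w v) ∧
      (∀ v : E, v ≠ 0 → 0 < gJ v v) ∧
      -- Ω is alternating and J is a complex structure
      (∀ v : E, Ω v v = 0) ∧
      J ∘ₗ J = -LinearMap.id ∧
      -- (1) compatibility of g_J, Ω and J
      (∀ v w : E, gJ v w = Ω v (J w)) ∧
      (∀ v w : E, Ω v w = gJ (J v) w) ∧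
      -- (2) J is a g_J-isometry
      (∀ v w : E, gJ (J v) (J w) = gJ v w) ∧
      -- (3) Ω has comass at most 1 with respect to g_J
      (∀ v w : E, (Ω v w) ^ 2 ≤ gJ v v * gJ w w - (gJ v w) ^ 2) ∧
      -- (4) planes calibrated by ω in (E, g) are J-holomorphic and calibrated by Ω
      (∀ v w : E, ‖v‖ = 1 → ‖w‖ = 1 → ⟪v, w⟫ = 0 → ω v w = 1 →
        gJ v v = 1 ∧ gJ w w = 1 ∧ gJ v w = 0 ∧ Ω v w = 1 ∧ w = J v) := by
  classical
  -- the skew operator dual to ω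
  set A : E →ₗ[ℝ] E :=
    (InnerProductSpace.toDual ℝ E).symm.toLinearEquiv.toLinearMap ∘ₗ
      (LinearMap.toContinuousLinearMap :
        (E →ₗ[ℝ] ℝ) ≃ₗ[ℝ] (E →L[ℝ] ℝ)).toLinearMap ∘ₗ ω with hAdef
  have hA : ∀ v w : E, ⟪A v, w⟫ = ω v w := by
    intro v w
    rw [hAdef]
    simp only [LinearMap.coe_comp, Function.comp_apply, LinearEquiv.coe_coe,
      LinearIsometryEquiv.coe_toLinearEquiv, InnerProductSpace.toDual_symm_apply]
    rfl
  have hanti : ∀ v w : E, ω w v = -ω v w := by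
    intro v w
    have h := hω (v + w)
    simp only [map_add, LinearMap.add_apply, hω] at h
    linarith
  have hAskew : ∀ v w : E, ⟪A v, w⟫ = -⟪v, A w⟫ := by
    intro v w
    rw [hA, real_inner_comm, hA, hanti]
  have hAself : ∀ v : E, ⟪A v, v⟫ = 0 := fun v => by rw [hA, hω]
  have hAnorm : ∀ v : E, ‖A v‖ ≤ ‖v‖ := by
    intro v
    have h := hcomass v (A v)
    have h1 : ω v (A v) = ‖A v‖ ^ 2 := by
      rw [← hA, real_inner_comm, real_inner_self_eq_norm_sq]
    have h2 : ⟪v, A v⟫ = 0 := by rw [real_inner_comm]; exact hAself v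
    rw [h1, h2] at h
    by_contra hcon
    push_neg at hcon
    have ht : 0 < ‖A v‖ := (norm_nonneg v).trans_lt hcon
    have h3 : ‖v‖ ^ 2 < ‖A v‖ ^ 2 := by nlinarith [norm_nonneg v]
    have h4 : ‖v‖ ^ 2 * ‖A v‖ ^ 2 < ‖A v‖ ^ 2 * ‖A v‖ ^ 2 :=
      mul_lt_mul_of_pos_right h3 (by positivity)
    nlinarith [h, h4]
  -- the eigenspace of A² with eigenvalue -1
  set V : Submodule ℝ E := LinearMap.ker (A ∘ₗ A + LinearMap.id) with hVdef
  have hVmem : ∀ x : E, x ∈ V ↔ A (A x) = -x := by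
    intro x
    rw [hVdef, LinearMap.mem_ker]
    simp only [LinearMap.add_apply, LinearMap.coe_comp, Function.comp_apply, LinearMap.id_apply]
    exact add_eq_zero_iff_eq_neg
  have hAV : ∀ x ∈ V, A x ∈ V := by
    intro x hx
    rw [hVmem] at hx ⊢
    rw [hx, map_neg]
  -- dimension parity
  have hevenV : Even (Module.finrank ℝ V) := by
    set Ahat : V →ₗ[ℝ] V := A.restrict hAV with hAhatdef
    have hAhat2 : Ahat ∘ₗ Ahat = -LinearMap.id := by
      ext x
      simp only [LinearMap.coe_comp, Function.comp_apply, LinearMap.neg_apply,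
        LinearMap.id_apply, hAhatdef, LinearMap.restrict_coe_apply]
      exact (hVmem x).mp x.2
    have hdet : (LinearMap.det Ahat) ^ 2 = (-1 : ℝ) ^ (Module.finrank ℝ V) := by
      rw [sq, ← LinearMap.det_comp, hAhat2]
      have : (-LinearMap.id : V →ₗ[ℝ] V) = (-1 : ℝ) • LinearMap.id := by
        ext x; simp
      rw [this, LinearMap.det_smul, LinearMap.det_id, mul_one]
    by_contra hodd
    rw [Nat.not_even_iff_odd] at hodd
    rw [hodd.neg_one_pow] at hdet
    nlinarith [sq_nonneg (LinearMap.det Ahat)]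
  have hevenVp : Even (Module.finrank ℝ Vᗮ) := by
    have hsum := Submodule.finrank_add_finrank_orthogonal (K := V)
    obtain ⟨a, ha⟩ := hevenV
    obtain ⟨b, hb⟩ := hdim
    exact ⟨b - a, by omega⟩
  obtain ⟨J₀, hJ₀sq, hJ₀skew⟩ := exists_cplx_struct Vᗮ hevenVp
  set P := V.orthogonalProjectionOnto with hPdef
  set Q := Vᗮ.orthogonalProjectionOnto with hQdef
  have hsum : ∀ x : E, (↑(P x) : E) + ↑(Q x) = x := fun x =>
    V.starProjection_add_starProjection_orthogonal x
  set J : E →ₗ[ℝ] E :=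
    (A ∘ₗ V.subtype ∘ₗ P.toLinearMap) + (Vᗮ.subtype ∘ₗ J₀ ∘ₗ Q.toLinearMap) with hJdef
  have hJx : ∀ x : E, J x = A ↑(P x) + ↑(J₀ (Q x)) := by
    intro x
    rw [hJdef]
    simp
  -- J agrees with A on V
  have hPV : ∀ x : E, x ∈ V → (↑(P x) : E) = x := by
    intro x hx
    rw [hPdef]
    exact congrArg Subtype.val (Submodule.orthogonalProjectionOnto_mem_subspace_eq_self (⟨x, hx⟩ : V))
  have hQV : ∀ x : E, x ∈ V → Q x = 0 := by
    intro x hx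
    exact Submodule.orthogonalProjectionOnto_apply_of_mem_orthogonal
      (Submodule.le_orthogonal_orthogonal V hx)
  have hPVp : ∀ x : E, x ∈ Vᗮ → P x = 0 := by
    intro x hx
    exact Submodule.orthogonalProjectionOnto_apply_of_mem_orthogonal hx
  have hQVp : ∀ x : E, x ∈ Vᗮ → (↑(Q x) : E) = x := by
    intro x hx
    exact congrArg Subtype.val (Submodule.orthogonalProjectionOnto_mem_subspace_eq_self (⟨x, hx⟩ : Vᗮ))
  have hJV : ∀ x : E, x ∈ V → J x = A x := by
    intro x hx
    rw [hJx, hPV x hx, hQV x hx, map_zero]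
    simp
  have hJVp : ∀ u : Vᗮ, J ↑u = ↑(J₀ u) := by
    intro u
    have hQu : Q ↑u = u := Subtype.ext (hQVp _ u.2)
    rw [hJx, hPVp _ u.2, hQu]
    simp
  -- J squares to -1
  have hJJ : ∀ x : E, J (J x) = -x := by
    intro x
    rw [hJx x, map_add]
    have h1 : J (A ↑(P x)) = A (A ↑(P x)) := hJV _ (hAV _ (P x).2)
    have h2 : J ↑(J₀ (Q x)) = ↑(J₀ (J₀ (Q x))) := hJVp (J₀ (Q x))
    rw [h1, h2, (hVmem _).mp (P x).2, hJ₀sq]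
    conv_rhs => rw [← hsum x]
    push_cast
    abel
  -- key decomposition of the inner product against J
  have hkey : ∀ x y : E, ⟪J x, y⟫ = ⟪A ↑(P x), ↑(P y)⟫ + ⟪(↑(J₀ (Q x)) : E), ↑(Q y)⟫ := by
    intro x y
    conv_lhs => rw [hJx x, ← hsum y]
    rw [inner_add_left, inner_add_right, inner_add_right]
    have c1 : ⟪(A ↑(P x) : E), ↑(Q y)⟫ = 0 :=
      Submodule.inner_right_of_mem_orthogonal (hAV _ (P x).2) (Q y).2
    have c2 : ⟪(↑(J₀ (Q x)) : E), ↑(P y)⟫ = 0 := by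
      rw [real_inner_comm]
      exact Submodule.inner_right_of_mem_orthogonal (P y).2 (J₀ (Q x)).2
    rw [c1, c2]
    ring
  have hJskew : ∀ x y : E, ⟪J x, y⟫ = -⟪x, J y⟫ := by
    intro x y
    rw [hkey, real_inner_comm (J y) x, hkey]
    have e1 : ⟪A ↑(P x), (↑(P y) : E)⟫ = -⟪A ↑(P y), ↑(P x)⟫ := by
      rw [hAskew, real_inner_comm]
    have e2 : ⟪(↑(J₀ (Q x)) : E), ↑(Q y)⟫ = -⟪(↑(J₀ (Q y)) : E), ↑(Q x)⟫ := by
      rw [← Submodule.coe_inner, ← Submodule.coe_inner, hJ₀skew, real_inner_comm]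
    rw [e1, e2]
    ring
  have hJorth : ∀ x y : E, ⟪J x, J y⟫ = ⟪x, y⟫ := by
    intro x y
    rw [hJskew x (J y), hJJ y, inner_neg_right, neg_neg]
  have hJself : ∀ x : E, ⟪J x, x⟫ = 0 := by
    intro x
    have h1 := hJskew x x
    have h2 : ⟪x, J x⟫ = ⟪J x, x⟫ := real_inner_comm _ _
    linarith
  -- the data
  refine ⟨innerₗ E, J, (innerₗ E).comp J, ?_, ?_, ?_, ?_, ?_, ?_, ?_, ?_, ?_⟩
  · intro v w
    simp only [innerₗ_apply_apply]
    exact real_inner_comm w v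
  · intro v hv
    simp only [innerₗ_apply_apply]
    rw [real_inner_self_eq_norm_sq]
    have : 0 < ‖v‖ := norm_pos_iff.mpr hv
    positivity
  · intro v
    simp only [LinearMap.comp_apply, innerₗ_apply_apply]
    exact hJself v
  · ext x
    simpa using hJJ x
  · intro v w
    simp only [LinearMap.comp_apply, innerₗ_apply_apply]
    exact (hJorth v w).symm
  · intro v w
    simp only [LinearMap.comp_apply, innerₗ_apply_apply]
  · intro v w
    simp only [innerₗ_apply_apply]
    exact hJorth v w
  · -- comass of Ω with respect to gJ
    intro v w
    simp only [LinearMap.comp_apply, innerₗ_apply_apply]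
    obtain ⟨a, ha⟩ : ∃ a : ℝ, ⟪v, w⟫ = a := ⟨_, rfl⟩
    obtain ⟨b, hb⟩ : ∃ b : ℝ, ⟪J v, w⟫ = b := ⟨_, rfl⟩
    obtain ⟨c, hc⟩ : ∃ c : ℝ, ⟪v, v⟫ = c := ⟨_, rfl⟩
    obtain ⟨d, hd⟩ : ∃ d : ℝ, ⟪w, w⟫ = d := ⟨_, rfl⟩
    rw [ha, hb, hc, hd]
    have hineq : a ^ 2 + b ^ 2 ≤ c * d := by
      rcases eq_or_lt_of_le (by positivity : (0:ℝ) ≤ a ^ 2 + b ^ 2) with h0 | h0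
      · have hvv : (0:ℝ) ≤ c := hc ▸ real_inner_self_nonneg
        have hww : (0:ℝ) ≤ d := hd ▸ real_inner_self_nonneg
        rw [← h0]
        exact mul_nonneg hvv hww
      · set z : E := a • v + b • J v with hzdef
        have hzw : ⟪z, w⟫ = a ^ 2 + b ^ 2 := by
          rw [hzdef, inner_add_left, real_inner_smul_left, real_inner_smul_left, ha, hb]
          ring
        have hzz : ⟪z, z⟫ = (a ^ 2 + b ^ 2) * c := by
          rw [hzdef]
          rw [inner_add_left, inner_add_right, inner_add_right]
          rw [real_inner_smul_left, real_inner_smul_left, real_inner_smul_left,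
            real_inner_smul_left, real_inner_smul_right, real_inner_smul_right,
            real_inner_smul_right, real_inner_smul_right]
          have o1 : ⟪v, J v⟫ = 0 := by rw [real_inner_comm]; exact hJself v
          have o2 : ⟪J v, v⟫ = 0 := hJself v
          have o3 : ⟪J v, J v⟫ = c := by rw [hJorth v v]; exact hc
          rw [o1, o2, o3, hc]
          ring
        have hcs := real_inner_mul_inner_self_le z w
        rw [hzw, hzz, hd] at hcs
        exact le_of_sq_le_sq_aux h0 (by linarith [hcs])
    linarith [hineq]
  · -- calibrated planes
    intro v w hv hw hvw hωvw
    have hAvw : ⟪A v, w⟫ = 1 := by rw [hA]; exact hωvw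
    have hAv : A v = w := by
      have hn : ‖A v‖ ≤ 1 := le_trans (hAnorm v) (le_of_eq hv)
      have hexp : ⟪A v - w, A v - w⟫ = ⟪A v, A v⟫ - 2 * ⟪A v, w⟫ + ⟪w, w⟫ := by
        rw [inner_sub_left, inner_sub_right, inner_sub_right, real_inner_comm w (A v)]
        ring
      have h1 : ⟪A v, A v⟫ ≤ 1 := by
        rw [real_inner_self_eq_norm_sq]
        calc ‖A v‖ ^ 2 ≤ 1 ^ 2 := pow_le_pow_left₀ (norm_nonneg _) hn 2
        _ = 1 := one_pow 2
      have h2 : ⟪w, w⟫ = 1 := by rw [real_inner_self_eq_norm_sq, hw]; norm_num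
      have h3 : ⟪A v - w, A v - w⟫ ≤ 0 := by rw [hexp, hAvw, h2]; linarith
      have h4 : A v - w = 0 := by
        have := real_inner_self_nonneg (x := A v - w)
        rw [← real_inner_self_eq_zero_aux]
        linarith
      exact sub_eq_zero.mp h4

    have hAw : A w = -v := by
      have hAwv : ⟪A w, -v⟫ = 1 := by
        rw [inner_neg_right, hA, hanti, hωvw]; ring
      have hn : ‖A w‖ ≤ 1 := le_trans (hAnorm w) (le_of_eq hw)
      have hexp : ⟪A w + v, A w + v⟫ = ⟪A w, A w⟫ + 2 * ⟪A w, v⟫ + ⟪v, v⟫ := by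
        rw [inner_add_left, inner_add_right, inner_add_right, real_inner_comm v (A w)]
        ring
      have h1 : ⟪A w, A w⟫ ≤ 1 := by
        rw [real_inner_self_eq_norm_sq]
        calc ‖A w‖ ^ 2 ≤ 1 ^ 2 := pow_le_pow_left₀ (norm_nonneg _) hn 2
        _ = 1 := one_pow 2
      have h2 : ⟪v, v⟫ = 1 := by rw [real_inner_self_eq_norm_sq, hv]; norm_num
      have h5 : ⟪A w, v⟫ = -1 := by
        have := hAwv; rw [inner_neg_right] at this; linarith
      have h3 : ⟪A w + v, A w + v⟫ ≤ 0 := by rw [hexp, h5, h2]; linarith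
      have h4 : A w + v = 0 := by
        have := real_inner_self_nonneg (x := A w + v)
        rw [← real_inner_self_eq_zero_aux]
        linarith
      exact eq_neg_of_add_eq_zero_left h4
    have hvV : v ∈ V := by rw [hVmem, hAv, hAw]
    have hJvw : J v = w := by rw [hJV v hvV, hAv]
    refine ⟨?_, ?_, ?_, ?_, hJvw.symm⟩
    · simp only [innerₗ_apply_apply]
      rw [real_inner_self_eq_norm_sq, hv]; norm_num
    · simp only [innerₗ_apply_apply]
      rw [real_inner_self_eq_norm_sq, hw]; norm_num
    · exact hvw
    · simp only [LinearMap.comp_apply, innerₗ_apply_apply]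
      rw [hJvw, real_inner_self_eq_norm_sq, hw]; norm_num
end
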